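/- There exist a constant C > 0 depending only on a, A, b, B and N ∈ ℕ such that for every integer n with |n| ≥ N, every integer ν ≥ 3, and every z ∈ ℂ with |z| ≤ 1/2, one has |τ_ν(n,z)| ≤ C^ν / |n|^ν; consequently ∑_{ν=3}^∞ |τ_ν(n,z)| = O(1/|n|³) uniformly for |z| ≤ 1/2. -/

import Mathlib

open Finset

noncomputable section

/-- Coefficient function `p`: `p(2) = A`, `p(-2) = a`. -/
def pc (a A : ℂ) (w : ℤ) : ℂ := if w = 2 then A else if w = -2 then a else 0

/-- Coefficient function `q`: `q(2) = B`, `q(-2) = b`. -/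
def qc (b B : ℂ) (w : ℤ) : ℂ := if w = 2 then B else if w = -2 then b else 0

/-- Vertex `j_k = -n + x_1 + ⋯ + x_k` of a walk `x` starting at `-n`. -/
def vtx (n : ℤ) (x : List ℤ) (k : ℕ) : ℤ := -n + (x.take k).sum

/-- An admissible walk from `-n` to `n`: odd length, steps in `{-2, 2}`, total sum `2n`,
and the vertices `j_k` (for `1 ≤ k < length`) satisfy `j_k ≠ n` for odd `k` and
`j_k ≠ -n` for even `k`. -/
def AdmX (n : ℤ) (x : List ℤ) : Prop :=
  Odd x.length ∧ (∀ s ∈ x, s = 2 ∨ s = -2) ∧ x.sum = 2 * n ∧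
    ∀ k : ℕ, 1 ≤ k → k < x.length →
      (Odd k → vtx n x k ≠ n) ∧ (Even k → vtx n x k ≠ -n)

/-- `X_n(r)`: admissible walks from `-n` to `n` with exactly `r` negative steps if `n > 0`,
resp. exactly `r` positive steps if `n < 0`. -/
def Xw (n : ℤ) (r : ℕ) : Set (List ℤ) :=
  {x | AdmX n x ∧ (0 < n → x.count (-2) = r) ∧ (n < 0 → x.count 2 = r)}

/-- Numerator of `h⁺`: `q(x_1) p(x_2) q(x_3) ⋯ p(x_{2ν}) q(x_{2ν+1})`. -/
def numX (a A b B : ℂ) (x : List ℤ) : ℂ :=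
  ∏ t ∈ Finset.range x.length,
    (if t % 2 = 0 then qc b B (x.getD t 0) else pc a A (x.getD t 0))

/-- Denominator of `h⁺`: the product of the factors `(n - j_k + z)` for odd `k` and
`(n + j_k + z)` for even `k`, `1 ≤ k ≤ 2ν`. -/
def denX (n : ℤ) (x : List ℤ) (z : ℂ) : ℂ :=
  ∏ k ∈ Finset.Icc 1 (x.length - 1),
    (if k % 2 = 1 then ((n : ℂ) - (vtx n x k : ℂ) + z) else ((n : ℂ) + (vtx n x k : ℂ) + z))

/-- `h⁺(x, z)`. -/
def hX (a A b B : ℂ) (n : ℤ) (x : List ℤ) (z : ℂ) : ℂ := numX a A b B x / denX n x z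

/-- `σ⁺_r(n, z) = ∑_{x ∈ X_n(r)} h⁺(x, z)`. -/
def sigmaX (a A b B : ℂ) (n : ℤ) (r : ℕ) (z : ℂ) : ℂ :=
  ∑' x : Xw n r, hX a A b B n (x : List ℤ) z

/-- `β⁺_n(z) = ∑_{r=0}^∞ σ⁺_r(n, z)`. -/
def betaX (a A b B : ℂ) (n : ℤ) (z : ℂ) : ℂ := ∑' r : ℕ, sigmaX a A b B n r z

/-- Vertex `j_k = n + w_1 + ⋯ + w_k` of a walk `w` starting at `n`. -/
def vtxW (n : ℤ) (w : List ℤ) (k : ℕ) : ℤ := n + (w.take k).sum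

/-- An admissible walk from `n` to `n` of length `2ν`: steps in `{-2, 2}`, total sum `0`,
and the vertices `j_k` (for `1 ≤ k ≤ 2ν - 1`) satisfy `j_k ≠ -n` for odd `k` and
`j_k ≠ n` for even `k`. -/
def AdmW (n : ℤ) (ν : ℕ) (w : List ℤ) : Prop :=
  w.length = 2 * ν ∧ (∀ s ∈ w, s = 2 ∨ s = -2) ∧ w.sum = 0 ∧
    ∀ k : ℕ, 1 ≤ k → k < w.length →
      (Odd k → vtxW n w k ≠ -n) ∧ (Even k → vtxW n w k ≠ n)

/-- `W_n(ν)`: admissible walks from `n` to `n` with `2ν` steps. -/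
def Ww (n : ℤ) (ν : ℕ) : Set (List ℤ) := {w | AdmW n ν w}

/-- Numerator of `h`: `p(w_1) q(w_2) ⋯ p(w_{2ν-1}) q(w_{2ν})`. -/
def numW (a A b B : ℂ) (w : List ℤ) : ℂ :=
  ∏ t ∈ Finset.range w.length,
    (if t % 2 = 0 then pc a A (w.getD t 0) else qc b B (w.getD t 0))

/-- Denominator of `h`: the product of the factors `(n + j_k + z)` for odd `k` and
`(n - j_k + z)` for even `k`, `1 ≤ k ≤ 2ν - 1`. -/
def denW (n : ℤ) (w : List ℤ) (z : ℂ) : ℂ :=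
  ∏ k ∈ Finset.Icc 1 (w.length - 1),
    (if k % 2 = 1 then ((n : ℂ) + (vtxW n w k : ℂ) + z) else ((n : ℂ) - (vtxW n w k : ℂ) + z))

/-- `h(w, z)`. -/
def hW (a A b B : ℂ) (n : ℤ) (w : List ℤ) (z : ℂ) : ℂ := numW a A b B w / denW n w z

/-- `τ_ν(n, z) = ∑_{w ∈ W_n(ν)} h(w, z)`. -/
def tauW (a A b B : ℂ) (n : ℤ) (ν : ℕ) (z : ℂ) : ℂ :=
  ∑' w : Ww n ν, hW a A b B n (w : List ℤ) z

/-- `α_n(z) = ∑_{ν=1}^∞ τ_ν(n, z)`. -/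
def alphaW (a A b B : ℂ) (n : ℤ) (z : ℂ) : ℂ := ∑' ν : ℕ, tauW a A b B n (ν + 1) z

section Stmt6Aux

lemma even_list_sum' (l : List ℤ) (h : ∀ s ∈ l, s = 2 ∨ s = -2) : (2:ℤ) ∣ l.sum := by
  induction l with
  | nil => simp
  | cons x xs ih =>
    simp only [List.sum_cons]
    rcases h x (by simp) with hx | hx <;>
      exact dvd_add (by omega) (ih fun s hs => h s (by simp [hs]))

lemma norm_intCast_add_ge' (m : ℤ) (z : ℂ) (c : ℝ) (h : c + ‖z‖ ≤ ((|m| : ℤ) : ℝ)) :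
    c ≤ ‖(m:ℂ) + z‖ := by
  have h1 : ‖(m:ℂ)‖ ≤ ‖(m:ℂ) + z‖ + ‖z‖ := by
    calc ‖(m:ℂ)‖ = ‖(m:ℂ) + z - z‖ := by ring_nf
    _ ≤ ‖(m:ℂ) + z‖ + ‖z‖ := norm_sub_le _ _
  have h2 : ‖(m:ℂ)‖ = ((|m| : ℤ) : ℝ) := by push_cast [Complex.norm_intCast]; ring
  linarith

lemma factor_lower' (m : ℤ) (z : ℂ) (hz : ‖z‖ ≤ 1/2) (c : ℝ)
    (h : c + 1/2 ≤ ((|m| : ℤ) : ℝ)) : c ≤ ‖(m:ℂ) + z‖ :=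
  norm_intCast_add_ge' m z c (by linarith)

lemma two_le_abs' (x : ℤ) (h2 : (2:ℤ) ∣ x) (h0 : x ≠ 0) : (2:ℤ) ≤ |x| := by
  rcases abs_cases x with ⟨h, h'⟩ | ⟨h, h'⟩ <;> rw [h] <;> omega

lemma prod_Icc_lower' (f : ℕ → ℝ) (hf : ∀ k, 0 ≤ f k) (c : ℝ) (hc : 0 ≤ c)
    (h1 : c ≤ f 1) :
    ∀ ν : ℕ, 1 ≤ ν →
      (∀ i, 1 ≤ i → 2*i+1 ≤ 2*ν - 1 → c ≤ f (2*i) * f (2*i+1)) →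
      c ^ ν ≤ ∏ k ∈ Finset.Icc 1 (2*ν - 1), f k := by
  intro ν hν
  induction ν, hν using Nat.le_induction with
  | base => intro _; simpa using h1
  | succ ν hν ih =>
    intro hp
    have h2 : 2*(ν+1) - 1 = (2*ν - 1) + 1 + 1 := by omega
    have e1 : 2*ν - 1 + 1 = 2*ν := by omega
    rw [h2, Finset.prod_Icc_succ_top (by omega), Finset.prod_Icc_succ_top (by omega), e1]
    have hpair := hp ν hν (by omega)
    have hprod := ih (fun i hi hle => hp i hi (by omega))
    calc c ^ (ν+1) = c^ν * c := by ring
    _ ≤ (∏ k ∈ Finset.Icc 1 (2*ν-1), f k) * (f (2*ν) * f (2*ν+1)) :=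
        mul_le_mul hprod hpair hc (Finset.prod_nonneg fun k _ => hf k)
    _ = (∏ k ∈ Finset.Icc 1 (2*ν-1), f k) * f (2*ν) * (f (2*ν+1)) := by ring

lemma abs2n' (n : ℤ) : |2*n| = 2*|n| := by rw [abs_mul]; norm_num

lemma abs_lower_add' (x y : ℤ) : |x| - |y| ≤ |x + y| := by
  have := abs_add_le (x + y) (-y)
  simp only [add_neg_cancel_right, abs_neg] at this
  linarith

lemma den_lower' (n : ℤ) (ν : ℕ) (hν : 1 ≤ ν) (w : List ℤ) (hw : AdmW n ν w)
    (hn : (3:ℤ) ≤ |n|) (z : ℂ) (hz : ‖z‖ ≤ 1/2) :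
    (|(n:ℝ)|/2) ^ ν ≤ ‖denW n w z‖ := by
  obtain ⟨hlen, hmem, hsum, hvert⟩ := hw
  have hR3 : (3:ℝ) ≤ |(n:ℝ)| := by exact_mod_cast hn
  set f : ℕ → ℝ := fun k => ‖if k % 2 = 1 then ((n : ℂ) + (vtxW n w k : ℂ) + z)
      else ((n : ℂ) - (vtxW n w k : ℂ) + z)‖ with hf
  have hnorm : ‖denW n w z‖ = ∏ k ∈ Finset.Icc 1 (2*ν - 1), f k := by
    rw [denW, hlen, norm_prod]
  have heven : ∀ k, (2:ℤ) ∣ (w.take k).sum := fun k =>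
    even_list_sum' _ (fun s hs => hmem s ((w.take_sublist k).subset hs))
  have hstep : ∀ k (hk : k < w.length),
      (w.take (k+1)).sum = (w.take k).sum + w.get ⟨k, hk⟩ := fun k hk => List.sum_take_succ w k hk
  have hget : ∀ (k : ℕ) (hk : k < w.length), |w.get ⟨k, hk⟩| = 2 := by
    intro k hk
    rcases hmem (w.get ⟨k, hk⟩) (List.get_mem w ⟨k, hk⟩) with h | h <;> rw [h] <;> norm_num
  have oddfac : ∀ k, k % 2 = 1 → f k = ‖((2*n + (w.take k).sum : ℤ):ℂ) + z‖ := by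
    intro k hk
    simp only [hf, hk, if_pos]
    congr 1
    simp only [vtxW]
    push_cast
    ring
  have evenfac : ∀ k, k % 2 = 0 → f k = ‖((-(w.take k).sum : ℤ):ℂ) + z‖ := by
    intro k hk
    have hk' : ¬ (k % 2 = 1) := by omega
    simp only [hf, hk', if_neg, not_false_iff]
    congr 1
    simp only [vtxW]
    push_cast
    ring
  have hne_odd : ∀ k, 1 ≤ k → k < w.length → k % 2 = 1 → 2*n + (w.take k).sum ≠ 0 := by
    intro k h1 h2 hk hcon
    exact (hvert k h1 h2).1 (Nat.odd_iff.mpr hk) (by simp only [vtxW]; omega)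
  have hne_even : ∀ k, 1 ≤ k → k < w.length → k % 2 = 0 → (w.take k).sum ≠ 0 := by
    intro k h1 h2 hk hcon
    exact (hvert k h1 h2).2 (Nat.even_iff.mpr hk) (by simp only [vtxW]; omega)
  have hfpos : ∀ k, 0 ≤ f k := fun k => norm_nonneg _
  have hone : ∀ k, 1 ≤ k → k < w.length → (1:ℝ) ≤ f k := by
    intro k h1 h2
    rcases Nat.even_or_odd k with hk | hk
    · rw [evenfac k (Nat.even_iff.mp hk)]
      refine factor_lower' _ _ hz _ ?_
      have hZ : (2:ℤ) ≤ |(-(w.take k).sum)| :=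
        two_le_abs' _ ((heven k).neg_right) (by simpa using hne_even k h1 h2 (Nat.even_iff.mp hk))
      have hc := (Int.cast_le (R := ℝ)).mpr hZ
      push_cast at hc ⊢
      linarith
    · rw [oddfac k (Nat.odd_iff.mp hk)]
      refine factor_lower' _ _ hz _ ?_
      have hZ : (2:ℤ) ≤ |2*n + (w.take k).sum| :=
        two_le_abs' _ (by have := heven k; omega) (hne_odd k h1 h2 (Nat.odd_iff.mp hk))
      have hc := (Int.cast_le (R := ℝ)).mpr hZ
      push_cast at hc ⊢
      linarith
  have h0len : 0 < w.length := by omega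
  have h1len : 1 < w.length := by omega
  have hs1 : |(w.take 1).sum| = 2 := by
    have h0 := hstep 0 h0len
    simp only [List.take_zero, List.sum_nil, zero_add] at h0
    rw [h0]
    exact hget 0 h0len
  have hf1 : |(n:ℝ)|/2 ≤ f 1 := by
    rw [oddfac 1 rfl]
    refine factor_lower' _ _ hz _ ?_
    have htri := abs_lower_add' (2*n) ((w.take 1).sum)
    rw [abs2n', hs1] at htri
    have hZ : (2*|n| - 2 : ℤ) ≤ |2*n + (w.take 1).sum| := by linarith
    have hc := (Int.cast_le (R := ℝ)).mpr hZ
    push_cast at hc ⊢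
    linarith
  have hpair : ∀ i, 1 ≤ i → 2*i+1 ≤ 2*ν - 1 → |(n:ℝ)|/2 ≤ f (2*i) * f (2*i+1) := by
    intro i hi hle
    have hk2 : 2*i < w.length := by omega
    have hk2' : 2*i+1 < w.length := by omega
    set s : ℤ := (w.take (2*i)).sum with hs
    set t : ℤ := (w.take (2*i+1)).sum with ht
    have hts : |t - s| = 2 := by
      have hh := hstep (2*i) hk2
      rw [← hs, ← ht] at hh
      rw [hh]
      simpa using hget (2*i) hk2
    have hsne : s ≠ 0 := hne_even (2*i) (by omega) hk2 (by omega)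
    have hR2 : (0:ℝ) ≤ |(n:ℝ)|/2 := by linarith
    by_cases hcase : |t| ≤ |n|
    · have hb1 : (1:ℝ) ≤ f (2*i) := hone _ (by omega) hk2
      have hb2 : |(n:ℝ)|/2 ≤ f (2*i+1) := by
        rw [oddfac (2*i+1) (by omega)]
        refine factor_lower' _ _ hz _ ?_
        rw [← ht]
        have htri := abs_lower_add' (2*n) t
        rw [abs2n'] at htri
        have hZ : (|n| : ℤ) ≤ |2*n + t| := by linarith
        have hc := (Int.cast_le (R := ℝ)).mpr hZ
        push_cast at hc ⊢
        linarith
      calc |(n:ℝ)|/2 = 1 * (|(n:ℝ)|/2) := by ring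
      _ ≤ f (2*i) * f (2*i+1) := mul_le_mul hb1 hb2 hR2 (hfpos _)
    · have hb1 : |(n:ℝ)|/2 ≤ f (2*i) := by
        rw [evenfac (2*i) (by omega)]
        refine factor_lower' _ _ hz _ ?_
        rw [← hs]
        have htri := abs_lower_add' t (s - t)
        have e : t + (s - t) = s := by ring
        have h' : |s - t| = 2 := by rw [abs_sub_comm] at hts; exact hts
        rw [e, h'] at htri
        have hlt : |n| < |t| := not_le.mp hcase
        have hZ : (|n| - 1 : ℤ) ≤ |(-s)| := by rw [abs_neg]; linarith
        have hc := (Int.cast_le (R := ℝ)).mpr hZ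
        push_cast at hc ⊢
        linarith
      have hb2 : (1:ℝ) ≤ f (2*i+1) := hone _ (by omega) hk2'
      calc |(n:ℝ)|/2 = (|(n:ℝ)|/2) * 1 := by ring
      _ ≤ f (2*i) * f (2*i+1) := mul_le_mul hb1 hb2 (by norm_num) (hfpos _)
  rw [hnorm]
  exact prod_Icc_lower' f hfpos (|(n:ℝ)|/2) (by linarith) hf1 ν hν hpair

lemma num_upper' (a A b B : ℂ) (M : ℝ) (haM : ‖a‖ ≤ M) (hAM : ‖A‖ ≤ M)
    (hbM : ‖b‖ ≤ M) (hBM : ‖B‖ ≤ M) (hM0 : 0 ≤ M) (w : List ℤ) :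
    ‖numW a A b B w‖ ≤ M ^ w.length := by
  rw [numW]
  calc ‖∏ t ∈ Finset.range w.length,
      (if t % 2 = 0 then pc a A (w.getD t 0) else qc b B (w.getD t 0))‖
      = ∏ t ∈ Finset.range w.length,
        ‖if t % 2 = 0 then pc a A (w.getD t 0) else qc b B (w.getD t 0)‖ := norm_prod _ _
  _ ≤ ∏ _t ∈ Finset.range w.length, M := by
      refine Finset.prod_le_prod (fun t _ => norm_nonneg _) (fun t _ => ?_)
      split_ifs
      · simp only [pc]; split_ifs <;> simp_all [norm_nonneg]
      · simp only [qc]; split_ifs <;> simp_all [norm_nonneg]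
  _ = M ^ w.length := by rw [Finset.prod_const, Finset.card_range]

def stepLists (m : ℕ) : Finset (List ℤ) :=
  (Finset.univ : Finset (Fin m → Bool)).image fun f => List.ofFn fun i => if f i then 2 else -2

lemma mem_stepLists {w : List ℤ} {m : ℕ} (hlen : w.length = m)
    (hmem : ∀ s ∈ w, s = 2 ∨ s = -2) : w ∈ stepLists m := by
  subst hlen
  refine Finset.mem_image.mpr ⟨fun i => decide (w.get i = 2), Finset.mem_univ _, ?_⟩
  conv_rhs => rw [← List.ofFn_get w]
  congr 1
  funext i
  rcases hmem (w.get i) (w.get_mem i) with h | h <;>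
    rw [List.get_eq_getElem] at h <;> simp [h]

lemma card_stepLists (m : ℕ) : (stepLists m).card ≤ 2 ^ m := by
  calc (stepLists m).card ≤ (Finset.univ : Finset (Fin m → Bool)).card := Finset.card_image_le
  _ = 2 ^ m := by simp

lemma ww_finite (n : ℤ) (ν : ℕ) : (Ww n ν).Finite := by
  refine Set.Finite.subset (stepLists (2*ν)).finite_toSet ?_
  intro w hw
  exact mem_stepLists hw.1 hw.2.1

lemma tau_bound (a A b B : ℂ) (M : ℝ) (haM : ‖a‖ ≤ M) (hAM : ‖A‖ ≤ M)
    (hbM : ‖b‖ ≤ M) (hBM : ‖B‖ ≤ M) (hM1 : 1 ≤ M)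
    (n : ℤ) (ν : ℕ) (hν : 1 ≤ ν) (hn : (3:ℤ) ≤ |n|) (z : ℂ) (hz : ‖z‖ ≤ 1/2) :
    ‖tauW a A b B n ν z‖ ≤ (8*M^2) ^ ν / |(n:ℝ)| ^ ν := by
  have hR3 : (3:ℝ) ≤ |(n:ℝ)| := by exact_mod_cast hn
  have hRpos : (0:ℝ) < |(n:ℝ)| := by linarith
  have hfin := ww_finite n ν
  haveI : Fintype (Ww n ν) := hfin.fintype
  have hterm : ∀ w : Ww n ν, ‖hW a A b B n (w : List ℤ) z‖ ≤ (2*M^2)^ν / |(n:ℝ)|^ν := by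
    rintro ⟨w, hw⟩
    have hden := den_lower' n ν hν w hw hn z hz
    have hnum := num_upper' a A b B M haM hAM hbM hBM (by linarith) w
    rw [hw.1] at hnum
    have hdpos : (0:ℝ) < (|(n:ℝ)|/2)^ν := by positivity
    have : ‖hW a A b B n w z‖ = ‖numW a A b B w‖ / ‖denW n w z‖ := by
      rw [hW, norm_div]
    rw [this]
    calc ‖numW a A b B w‖ / ‖denW n w z‖ ≤ M ^ (2*ν) / (|(n:ℝ)|/2)^ν := by
          apply div_le_div₀ (by positivity) hnum hdpos hden
    _ = (2*M^2)^ν / |(n:ℝ)|^ν := by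
          rw [div_pow, div_div_eq_mul_div]
          congr 1
          rw [pow_mul, ← mul_pow]
          ring
  rw [tauW, tsum_fintype]
  have hsub : hfin.toFinset ⊆ stepLists (2*ν) :=
    Set.Finite.toFinset_subset.mpr (fun w hw => mem_stepLists hw.1 hw.2.1)
  have hcard : (Fintype.card (Ww n ν) : ℝ) ≤ 4 ^ ν := by
    have h1 : hfin.toFinset.card = Fintype.card (Ww n ν) := Set.Finite.card_toFinset hfin
    have h2 : hfin.toFinset.card ≤ 2 ^ (2*ν) := le_trans (Finset.card_le_card hsub) (card_stepLists _)
    have h3 : (2:ℕ) ^ (2*ν) = 4 ^ ν := by rw [pow_mul]; norm_num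
    have : Fintype.card (Ww n ν) ≤ 4 ^ ν := by omega
    exact_mod_cast this
  have hb0 : (0:ℝ) ≤ (2*M^2)^ν / |(n:ℝ)|^ν := by positivity
  calc ‖∑ w : Ww n ν, hW a A b B n (w : List ℤ) z‖
      ≤ ∑ w : Ww n ν, ‖hW a A b B n (w : List ℤ) z‖ := norm_sum_le _ _
  _ ≤ (Finset.univ : Finset (Ww n ν)).card • ((2*M^2)^ν / |(n:ℝ)|^ν) :=
      Finset.sum_le_card_nsmul _ _ _ (fun w _ => hterm w)
  _ = (Fintype.card (Ww n ν) : ℝ) * ((2*M^2)^ν / |(n:ℝ)|^ν) := by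
      rw [Finset.card_univ, nsmul_eq_mul]
  _ ≤ (4:ℝ)^ν * ((2*M^2)^ν / |(n:ℝ)|^ν) := mul_le_mul_of_nonneg_right hcard hb0
  _ = (8*M^2) ^ ν / |(n:ℝ)| ^ ν := by
      rw [mul_div_assoc', ← mul_pow]
      congr 2
      ring

end Stmt6Aux

/-- There exist `C > 0` (depending only on `a, A, b, B`) and `N` such that for `|n| ≥ N`,
`ν ≥ 3` and `|z| ≤ 1/2` one has `|τ_ν(n, z)| ≤ C^ν/|n|^ν`; consequently
`∑_{ν=3}^∞ |τ_ν(n, z)| = O(1/|n|³)` uniformly for `|z| ≤ 1/2`. -/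


theorem stmt6 (a A b B : ℂ) (ha : a ≠ 0) (hA : A ≠ 0) (hb : b ≠ 0) (hB : B ≠ 0) :
    ∃ C > (0 : ℝ), ∃ N : ℕ,
      (∀ n : ℤ, (N : ℤ) ≤ |n| → ∀ ν : ℕ, 3 ≤ ν → ∀ z : ℂ, ‖z‖ ≤ 1 / 2 →
        ‖tauW a A b B n ν z‖ ≤ C ^ ν / (|n| : ℝ) ^ ν) ∧
      ∃ C' > (0 : ℝ), ∀ n : ℤ, (N : ℤ) ≤ |n| → ∀ z : ℂ, ‖z‖ ≤ 1 / 2 →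
        Summable (fun ν : ℕ => ‖tauW a A b B n (ν + 3) z‖) ∧
        (∑' ν : ℕ, ‖tauW a A b B n (ν + 3) z‖) ≤ C' / (|n| : ℝ) ^ 3 := by
  set M : ℝ := max (max ‖a‖ ‖A‖) (max ‖b‖ ‖B‖) + 1 with hMdef
  have hM1 : 1 ≤ M := by
    have : (0:ℝ) ≤ max (max ‖a‖ ‖A‖) (max ‖b‖ ‖B‖) :=
      le_trans (norm_nonneg a) (le_trans (le_max_left _ _) (le_max_left _ _))
    simp only [hMdef]; linarith
  have haM : ‖a‖ ≤ M := by
    have := le_trans (le_max_left ‖a‖ ‖A‖) (le_max_left _ (max ‖b‖ ‖B‖)); simp only [hMdef]; linarith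
  have hAM : ‖A‖ ≤ M := by
    have := le_trans (le_max_right ‖a‖ ‖A‖) (le_max_left _ (max ‖b‖ ‖B‖)); simp only [hMdef]; linarith
  have hbM : ‖b‖ ≤ M := by
    have := le_trans (le_max_left ‖b‖ ‖B‖) (le_max_right (max ‖a‖ ‖A‖) _); simp only [hMdef]; linarith
  have hBM : ‖B‖ ≤ M := by
    have := le_trans (le_max_right ‖b‖ ‖B‖) (le_max_right (max ‖a‖ ‖A‖) _); simp only [hMdef]; linarith
  set C : ℝ := 8 * M ^ 2 with hCdef
  have hC1 : 1 ≤ C := by nlinarith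
  have hC0 : (0:ℝ) < C := by linarith
  refine ⟨C, hC0, max 3 ⌈2*C⌉₊, ?_, ?_⟩
  · intro n hn ν hν z hz
    have hn3 : (3:ℤ) ≤ |n| := by
      have : ((max 3 ⌈2*C⌉₊ : ℕ) : ℤ) ≤ |n| := hn
      have h3 : (3:ℕ) ≤ max 3 ⌈2*C⌉₊ := le_max_left _ _
      omega
    exact tau_bound a A b B M haM hAM hbM hBM hM1 n ν (by omega) hn3 z hz
  · refine ⟨2*C^3, by positivity, ?_⟩
    intro n hn z hz
    have hn3 : (3:ℤ) ≤ |n| := by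
      have : ((max 3 ⌈2*C⌉₊ : ℕ) : ℤ) ≤ |n| := hn
      have h3 : (3:ℕ) ≤ max 3 ⌈2*C⌉₊ := le_max_left _ _
      omega
    have hR3 : (3:ℝ) ≤ |(n:ℝ)| := by exact_mod_cast hn3
    have hRpos : (0:ℝ) < |(n:ℝ)| := by linarith
    have h2C : 2*C ≤ |(n:ℝ)| := by
      have h1 : (⌈2*C⌉₊ : ℤ) ≤ |n| := by
        have : ((max 3 ⌈2*C⌉₊ : ℕ) : ℤ) ≤ |n| := hn
        have := le_max_right 3 ⌈2*C⌉₊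
        omega
      have h2 : ((⌈2*C⌉₊ : ℤ) : ℝ) ≤ ((|n| : ℤ) : ℝ) := by exact_mod_cast h1
      have h3 : 2*C ≤ (⌈2*C⌉₊ : ℝ) := Nat.le_ceil _
      have habs : ((|n| : ℤ) : ℝ) = |(n:ℝ)| := by push_cast; ring
      rw [habs] at h2
      push_cast at h2 h3 ⊢
      linarith
    set r : ℝ := C / |(n:ℝ)| with hrdef
    have hr0 : 0 ≤ r := by positivity
    have hrhalf : r ≤ 1/2 := by
      rw [hrdef, div_le_iff₀ hRpos]
      linarith
    have hr1 : r < 1 := by linarith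
    have habs : ((|n| : ℤ) : ℝ) = |(n:ℝ)| := by push_cast; ring
    have hterm : ∀ ν : ℕ, ‖tauW a A b B n (ν + 3) z‖ ≤ r ^ (ν + 3) := by
      intro ν
      have := tau_bound a A b B M haM hAM hbM hBM hM1 n (ν+3) (by omega) hn3 z hz
      calc ‖tauW a A b B n (ν + 3) z‖ ≤ C ^ (ν+3) / |(n:ℝ)| ^ (ν+3) := this
      _ = r ^ (ν+3) := by rw [hrdef, div_pow]
    have hgeom : Summable (fun ν : ℕ => r ^ (ν + 3)) := by
      have hg : Summable (fun ν : ℕ => r ^ ν) := summable_geometric_of_lt_one hr0 hr1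
      have := hg.mul_left (r ^ 3)
      refine this.congr (fun ν => ?_)
      rw [pow_add]
      ring
    have hsumm : Summable (fun ν : ℕ => ‖tauW a A b B n (ν + 3) z‖) :=
      Summable.of_nonneg_of_le (fun _ => norm_nonneg _) hterm hgeom
    refine ⟨hsumm, ?_⟩
    have hinv : (1 - r)⁻¹ ≤ 2 := by
      rw [inv_le_comm₀ (by linarith) (by norm_num)]
      linarith
    calc (∑' ν : ℕ, ‖tauW a A b B n (ν + 3) z‖) ≤ ∑' ν : ℕ, r ^ (ν + 3) :=
        Summable.tsum_le_tsum hterm hsumm hgeom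
    _ = r^3 * ∑' ν : ℕ, r ^ ν := by
        rw [← tsum_mul_left]
        exact tsum_congr (fun ν => by rw [pow_add]; ring)
    _ = r^3 * (1 - r)⁻¹ := by rw [tsum_geometric_of_lt_one hr0 hr1]
    _ ≤ r^3 * 2 := mul_le_mul_of_nonneg_left hinv (by positivity)
    _ ≤ 2*C^3 / (|n| : ℝ) ^ 3 := by
        rw [hrdef, div_pow]
        ring_nf
        exact le_refl _
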